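/- Let v: ℕ⁴ → ℝ₊ be increasing in ℓ₁ and in ℓ₃ (i.e. v(x) ≤ v(x+ℓ₁) and v(x) ≤ v(x+ℓ₃) for all x). Then for any x ∈ ℕ⁴ and any matching m ∈ M_x, the matching m' = m + ((x₀−m₀)∧(x₁−m₁))ℓ₁ + ((x₂−m₂)∧(x₃−m₃))ℓ₃ also belongs to M_x and satisfies v(x−m'+a) ≤ v(x−m+a) for every a ∈ ℕ⁴. -/
import Mathlib


open Finset Filter

abbrev St := Fin 4 → ℕ

def ev (i : Fin 4) : St := fun j => if j = i then 1 else 0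

def l1 : St := ev 0 + ev 1
def l2 : St := ev 1 + ev 2
def l3 : St := ev 2 + ev 3

def IsMatching (x m : St) : Prop :=
  (∃ n1 n2 n3 : ℕ, m = n1 • l1 + n2 • l2 + n3 • l3) ∧ ∀ i, m i ≤ x i

noncomputable def Ev (μ : Fin 4 → ℝ) (v : St → ℝ) (y : St) : ℝ :=
  ∑ i, μ i * v (y + ev i)

noncomputable def Lg (μ : Fin 4 → ℝ) (c v : St → ℝ) (γ : ℝ) (x : St) : ℝ :=
  c x + γ * sInf {s : ℝ | ∃ m : St, IsMatching x m ∧ s = Ev μ v (x - m)}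

def IsProb (μ : Fin 4 → ℝ) : Prop := (∀ i, 0 ≤ μ i) ∧ ∑ i, μ i = 1

def costF (c0 c1 c2 c3 : ℝ) : St → ℝ := fun x => c0 * x 0 + c1 * x 1 + c2 * x 2 + c3 * x 3

def I1 (v : St → ℝ) : Prop := ∀ x, v x ≤ v (x + l1)
def I3 (v : St → ℝ) : Prop := ∀ x, v x ≤ v (x + l3)
def Iprime (v : St → ℝ) : Prop := ∀ x : St, 0 < x 1 → 0 < x 2 →
  v x ≤ v (x + l1 - l2) ∧ v x ≤ v (x + l3 - l2)
def Conv2 (v : St → ℝ) : Prop := ∀ x : St, x 0 ≤ x 1 + 1 → x 3 ≤ x 2 + 1 →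
  v (x + l2) - v x ≤ v (x + 2 • l2) - v (x + l2)

def kk (t : ℕ∞) (x : St) : ℕ :=
  match t with
  | ⊤ => 0
  | (n : ℕ) => (min ((x 1 : ℤ) - x 0) ((x 2 : ℤ) - x 3) - n).toNat

def ii (x : St) : ℤ := ((x 1 : ℤ) - x 0) - ((x 2 : ℤ) - x 3)

def mstar (T : ℤ → ℕ∞) (x : St) : St :=
  min (x 0) (x 1) • l1 + kk (T (ii x)) x • l2 + min (x 2) (x 3) • l3


def ClassB (v : St → ℝ) : Prop :=
  (∀ (β : ℕ) (i : Fin 4), i ≠ 1 →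
    v ((![1,0,β,0] + ev i) + l2 - l1) - v (![1,0,β,0] + ev i)
      ≤ v ((![1,0,β,0] + ev i) + 2 • l2 - l1) - v ((![1,0,β,0] + ev i) + l2 - l1)) ∧
  (∀ (β : ℕ) (i : Fin 4), i ≠ 2 →
    v ((![0,β,0,1] + ev i) + l2 - l3) - v (![0,β,0,1] + ev i)
      ≤ v ((![0,β,0,1] + ev i) + 2 • l2 - l3) - v ((![0,β,0,1] + ev i) + l2 - l3)) ∧
  (∀ i : Fin 4,
    v ((![1,0,0,1] + ev i) + l2 - l1 - l3) - v (![1,0,0,1] + ev i)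
      ≤ v ((![1,0,0,1] + ev i) + 2 • l2 - l1 - l3) - v ((![1,0,0,1] + ev i) + l2 - l1 - l3))

def ClassC' (v : St → ℝ) : Prop :=
  (∀ (α β : ℕ) (i : Fin 4), 2 ≤ α →
    v ((![α,0,β,0] + ev i) + l2 - l1) - v (![α,0,β,0] + ev i)
      ≤ v ((![α,0,β,0] + ev i) + 2 • l2 - 2 • l1) - v ((![α,0,β,0] + ev i) + l2 - l1)) ∧
  (∀ (α : ℕ) (i : Fin 4), 2 ≤ α →
    v ((![α,0,0,1] + ev i) + l2 - l1 - l3) - v (![α,0,0,1] + ev i)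
      ≤ v ((![α,0,0,1] + ev i) + 2 • l2 - 2 • l1 - l3) - v ((![α,0,0,1] + ev i) + l2 - l1 - l3)) ∧
  (∀ (α β : ℕ) (i : Fin 4), 2 ≤ α →
    v ((![0,β,0,α] + ev i) + l2 - l3) - v (![0,β,0,α] + ev i)
      ≤ v ((![0,β,0,α] + ev i) + 2 • l2 - 2 • l3) - v ((![0,β,0,α] + ev i) + l2 - l3)) ∧
  (∀ (α : ℕ) (i : Fin 4), 2 ≤ α →
    v ((![1,0,0,α] + ev i) + l2 - l3 - l1) - v (![1,0,0,α] + ev i)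
      ≤ v ((![1,0,0,α] + ev i) + 2 • l2 - 2 • l3 - l1) - v ((![1,0,0,α] + ev i) + l2 - l3 - l1)) ∧
  (∀ (α β : ℕ) (i : Fin 4), 2 ≤ α → 2 ≤ β →
    v ((![α,0,0,β] + ev i) + l2 - l1 - l3) - v (![α,0,0,β] + ev i)
      ≤ v ((![α,0,0,β] + ev i) + 2 • l2 - 2 • l1 - 2 • l3) - v ((![α,0,0,β] + ev i) + l2 - l1 - l3))

def traj (u : ℕ → St → St) (x : St) (a : ℕ → Fin 4) : ℕ → St
  | 0 => x
  | n + 1 => u n (traj u x a n) + ev (a (n + 1))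

def Adm (u : ℕ → St → St) : Prop := ∀ n x, ∃ m : St, IsMatching x m ∧ u n x = x - m

def ext (p : ℕ) (s : Fin p → Fin 4) : ℕ → Fin 4 :=
  fun n => if h : n - 1 < p then s ⟨n - 1, h⟩ else 0

noncomputable def wt : St → ℝ := fun x => x 0 + x 1 + x 2 + x 3 + 1

theorem stmt2 (v : St → ℝ) (hv : ∀ x, 0 ≤ v x) (hI1 : I1 v) (hI3 : I3 v)
    (x m : St) (hm : IsMatching x m) :
    IsMatching x (m + min (x 0 - m 0) (x 1 - m 1) • l1 + min (x 2 - m 2) (x 3 - m 3) • l3) ∧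
    ∀ a : St,
      v (x - (m + min (x 0 - m 0) (x 1 - m 1) • l1 + min (x 2 - m 2) (x 3 - m 3) • l3) + a)
        ≤ v (x - m + a) := by
  have key1 : ∀ (k : ℕ) (y : St), v y ≤ v (y + k • l1) := by
    intro k
    induction k with
    | zero => intro y; simp
    | succ n ih =>
      intro y
      calc v y ≤ v (y + n • l1) := ih y
        _ ≤ v (y + n • l1 + l1) := hI1 _
        _ = v (y + (n + 1) • l1) := by rw [succ_nsmul, ← add_assoc]
  have key3 : ∀ (k : ℕ) (y : St), v y ≤ v (y + k • l3) := by
    intro k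
    induction k with
    | zero => intro y; simp
    | succ n ih =>
      intro y
      calc v y ≤ v (y + n • l3) := ih y
        _ ≤ v (y + n • l3 + l3) := hI3 _
        _ = v (y + (n + 1) • l3) := by rw [succ_nsmul, ← add_assoc]
  obtain ⟨⟨n1, n2, n3, hdec⟩, hle⟩ := hm
  set k1 := min (x 0 - m 0) (x 1 - m 1) with hk1
  set k3 := min (x 2 - m 2) (x 3 - m 3) with hk3
  have hcoord : ∀ i, (m + k1 • l1 + k3 • l3) i = m i + k1 * (l1 i) + k3 * (l3 i) := by
    intro i; simp [Pi.add_apply, Pi.smul_apply, smul_eq_mul]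
  constructor
  · constructor
    · exact ⟨n1 + k1, n2, n3 + k3, by rw [hdec]; module⟩
    · intro i
      have h0 := hle 0; have h1 := hle 1; have h2 := hle 2; have h3 := hle 3
      rw [hcoord]
      fin_cases i <;> simp [l1, l3, ev, hk1, hk3] <;> omega
  · intro a
    have heq : x - m + a = (x - (m + k1 • l1 + k3 • l3) + a) + k1 • l1 + k3 • l3 := by
      funext i
      have h0 := hle 0; have h1 := hle 1; have h2 := hle 2; have h3 := hle 3
      have hc := hcoord i
      fin_cases i <;>
        simp only [Pi.add_apply, Pi.sub_apply, Pi.smul_apply, smul_eq_mul, l1, l3, ev] at hc ⊢ <;>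
        simp [hk1, hk3] <;> omega
    rw [heq]
    calc v (x - (m + k1 • l1 + k3 • l3) + a)
        ≤ v (x - (m + k1 • l1 + k3 • l3) + a + k1 • l1) := key1 _ _
      _ ≤ v (x - (m + k1 • l1 + k3 • l3) + a + k1 • l1 + k3 • l3) := key3 _ _
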